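/- Let X be a real normed linear space, E ⊆ X bounded uniquely remotal with Chebyshev center 0, and F the farthest point map. Suppose {x_n} ⊆ [0, F(0)] with x_n = μ_n F(0), μ_n > 0. If ψ_n ∈ X* are norm-one functionals with ψ_n(F(x_n) − x_n) = ‖F(x_n) − x_n‖, then ψ_n(F(0)) ≤ 0 for all n. -/
import Mathlib


open Filter

/-- Farthest distance from `x` to a set `E`. -/
noncomputable def fdist {X : Type*} [NormedAddCommGroup X] (x : X) (E : Set X) : ℝ :=
  sSup ((fun e => ‖x - e‖) '' E)

theorem functional_nonpos
    {X : Type*} [NormedAddCommGroup X] [NormedSpace ℝ X]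
    (E : Set X) (hE : E.Nonempty) (hb : Bornology.IsBounded E)
    (F : X → X)
    (hF : ∀ x : X, F x ∈ E ∧ ‖x - F x‖ = fdist x E ∧
      ∀ e ∈ E, ‖x - e‖ = fdist x E → e = F x)
    (hc : fdist (0 : X) E = ⨅ x : X, fdist x E)
    (x : ℕ → X) (μ : ℕ → ℝ) (hμ : ∀ n, 0 < μ n)
    (hx : ∀ n, x n = μ n • F 0)
    (ψ : ℕ → X →L[ℝ] ℝ) (hψn : ∀ n, ‖ψ n‖ = 1)
    (hψ : ∀ n, ψ n (F (x n) - x n) = ‖F (x n) - x n‖) :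
    ∀ n, ψ n (F 0) ≤ 0 := by
  obtain ⟨C, hC⟩ := hb.exists_norm_le
  have hbdd : ∀ y : X, BddAbove ((fun e => ‖y - e‖) '' E) := fun y =>
    ⟨‖y‖ + C, by
      rintro _ ⟨e, he, rfl⟩
      calc ‖y - e‖ ≤ ‖y‖ + ‖e‖ := norm_sub_le _ _
        _ ≤ ‖y‖ + C := by linarith [hC e he]⟩
  have hnonneg : ∀ y : X, 0 ≤ fdist y E := fun y => by
    obtain ⟨e, he⟩ := hE
    exact le_trans (norm_nonneg _) (le_csSup (hbdd y) ⟨e, he, rfl⟩)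
  intro n
  obtain ⟨hFmem, hFd, -⟩ := hF (x n)
  have h1 : ‖F (x n)‖ ≤ fdist 0 E := by
    have := le_csSup (hbdd 0) ⟨F (x n), hFmem, rfl⟩
    simpa [fdist] using this
  have h2 : fdist 0 E ≤ fdist (x n) E := by
    rw [hc]
    exact ciInf_le ⟨0, by rintro _ ⟨y, rfl⟩; exact hnonneg y⟩ (x n)
  have h3 : (ψ n) (F (x n)) ≤ ‖F (x n)‖ :=
    calc (ψ n) (F (x n)) ≤ |(ψ n) (F (x n))| := le_abs_self _
      _ ≤ ‖ψ n‖ * ‖F (x n)‖ := (ψ n).le_opNorm _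
      _ = ‖F (x n)‖ := by rw [hψn n, one_mul]
  have hd : ‖F (x n) - x n‖ = fdist (x n) E := by rw [← hFd, norm_sub_rev]
  have h5 := hψ n
  rw [map_sub] at h5
  have h4 : (ψ n) (x n) ≤ 0 := by linarith
  rw [hx n, map_smul, smul_eq_mul] at h4
  nlinarith [hμ n]
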